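/- Let I be a bi-homogeneous ideal of R such that neither X₀ nor ℓ₀ is a zero-divisor in R/I, and let I′ = (I + ⟨X₀−1, ℓ₀−1⟩) ∩ ℚ[X₁,…,Xₙ,ℓ₁,…,ℓ_k]. Then for all (i,j), the bi-homogenization map φ_{i,j} sends I′_{≤i,≤j} onto I_{i,j}; that is, φ_{i,j}(I′_{≤i,≤j}) = I_{i,j}. -/

import Mathlib

open MvPolynomial

noncomputable section

abbrev Rvars (n k : ℕ) := Fin (n+1) ⊕ Fin (k+1)

def bw (n k : ℕ) : Rvars n k → ℕ × ℕ := Sum.elim (fun _ => (1,0)) (fun _ => (0,1))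

abbrev Rpoly (n k : ℕ) := MvPolynomial (Rvars n k) ℚ

def IsBihom (n k : ℕ) (I : Ideal (Rpoly n k)) : Prop :=
  ∀ f ∈ I, ∀ d : ℕ × ℕ, weightedHomogeneousComponent (bw n k) d f ∈ I

def Hcoeff (n k : ℕ) (I : Ideal (Rpoly n k)) (d : ℕ × ℕ) : ℕ :=
  Module.finrank ℚ
    ((weightedHomogeneousSubmodule ℚ (bw n k) d) ⧸
      (Submodule.comap (weightedHomogeneousSubmodule ℚ (bw n k) d).subtype
        (Submodule.restrictScalars ℚ I)))

def Hseries (n k : ℕ) (I : Ideal (Rpoly n k)) : MvPowerSeries (Fin 2) ℤ :=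
  fun d => (Hcoeff n k I (d 0, d 1) : ℤ)

abbrev Rvars' (n k : ℕ) := Fin n ⊕ Fin k

/-- Embedding of the affine variables X₁,…,Xₙ,ℓ₁,…,ℓ_k into X₀,…,Xₙ,ℓ₀,…,ℓ_k. -/
def embedVars (n k : ℕ) : Rvars' n k → Rvars n k := Sum.map Fin.succ Fin.succ

def degXmon (n k : ℕ) (d : Rvars' n k →₀ ℕ) : ℕ := ∑ p : Fin n, d (Sum.inl p)
def degLmon (n k : ℕ) (d : Rvars' n k →₀ ℕ) : ℕ := ∑ q : Fin k, d (Sum.inr q)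

/-- The bi-homogenization φ_{i,j} to bidegree (i,j). -/
def phiH (n k : ℕ) (i j : ℕ) (f : MvPolynomial (Rvars' n k) ℚ) : Rpoly n k :=
  (AddMonoidAlgebra.coeff f).sum fun d c => monomial
    (Finsupp.mapDomain (embedVars n k) d
      + Finsupp.single (Sum.inl 0) (i - degXmon n k d)
      + Finsupp.single (Sum.inr 0) (j - degLmon n k d)) c

/-- weight giving the X-degree of an affine polynomial -/
def wX' (n k : ℕ) : Rvars' n k → ℕ := Sum.elim (fun _ => 1) (fun _ => 0)
/-- weight giving the ℓ-degree of an affine polynomial -/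
def wL' (n k : ℕ) : Rvars' n k → ℕ := Sum.elim (fun _ => 0) (fun _ => 1)

-- helpers
section Helpers

variable {n k : ℕ}

lemma embed_inj : Function.Injective (embedVars n k) :=
  (Fin.succ_injective _).sumMap (Fin.succ_injective _)

lemma embed_ne_inl0 (x : Rvars' n k) : embedVars n k x ≠ Sum.inl 0 := by
  cases x <;> simp [embedVars, Fin.succ_ne_zero]

lemma embed_ne_inr0 (x : Rvars' n k) : embedVars n k x ≠ Sum.inr 0 := by
  cases x <;> simp [embedVars, Fin.succ_ne_zero]

lemma inl0_not_range : Sum.inl 0 ∉ Set.range (embedVars n k) := by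
  rintro ⟨x, hx⟩; exact embed_ne_inl0 x hx

lemma inr0_not_range : Sum.inr 0 ∉ Set.range (embedVars n k) := by
  rintro ⟨x, hx⟩; exact embed_ne_inr0 x hx

lemma weight_elim_left {α β : Type*} [Fintype α] [Fintype β] (d : α ⊕ β →₀ ℕ) :
    Finsupp.weight (Sum.elim (fun _ => 1) (fun _ => 0) : α ⊕ β → ℕ) d
      = ∑ p : α, d (Sum.inl p) := by
  classical
  rw [Finsupp.weight_apply, Finsupp.sum_fintype]
  · rw [Fintype.sum_sum_type]; simp
  · intro x; simp

lemma weight_elim_right {α β : Type*} [Fintype α] [Fintype β] (d : α ⊕ β →₀ ℕ) :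
    Finsupp.weight (Sum.elim (fun _ => 0) (fun _ => 1) : α ⊕ β → ℕ) d
      = ∑ q : β, d (Sum.inr q) := by
  classical
  rw [Finsupp.weight_apply, Finsupp.sum_fintype]
  · rw [Fintype.sum_sum_type]; simp
  · intro x; simp

lemma weight_bw (D : Rvars n k →₀ ℕ) :
    Finsupp.weight (bw n k) D
      = (∑ p : Fin (n+1), D (Sum.inl p), ∑ q : Fin (k+1), D (Sum.inr q)) := by
  have h1 : (Finsupp.weight (bw n k) D).1
      = Finsupp.weight (Sum.elim (fun _ => 1) (fun _ => 0) : Rvars n k → ℕ) D := by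
    rw [Finsupp.weight_apply, Finsupp.weight_apply, Finsupp.sum, Finsupp.sum, Prod.fst_sum]
    exact Finset.sum_congr rfl fun x _ => by cases x <;> simp [bw]
  have h2 : (Finsupp.weight (bw n k) D).2
      = Finsupp.weight (Sum.elim (fun _ => 0) (fun _ => 1) : Rvars n k → ℕ) D := by
    rw [Finsupp.weight_apply, Finsupp.weight_apply, Finsupp.sum, Finsupp.sum, Prod.snd_sum]
    exact Finset.sum_congr rfl fun x _ => by cases x <;> simp [bw]
  ext
  · rw [h1, weight_elim_left]
  · rw [h2, weight_elim_right]

lemma degXmon_eq (d : Rvars' n k →₀ ℕ) :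
    degXmon n k d = Finsupp.weight (wX' n k) d := (weight_elim_left d).symm

lemma degLmon_eq (d : Rvars' n k →₀ ℕ) :
    degLmon n k d = Finsupp.weight (wL' n k) d := (weight_elim_right d).symm

end Helpers

section Helpers2
variable {n k : ℕ}

/-- monomial-level homogenization map -/
def Tmap (n k i j : ℕ) (d : Rvars' n k →₀ ℕ) : Rvars n k →₀ ℕ :=
  Finsupp.mapDomain (embedVars n k) d
    + Finsupp.single (Sum.inl 0) (i - degXmon n k d)
    + Finsupp.single (Sum.inr 0) (j - degLmon n k d)

lemma phiH_def (i j : ℕ) (f : MvPolynomial (Rvars' n k) ℚ) :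
    phiH n k i j f = (AddMonoidAlgebra.coeff f).sum fun d c => monomial (Tmap n k i j d) c := rfl

lemma Tmap_apply_embed (i j : ℕ) (d : Rvars' n k →₀ ℕ) (x : Rvars' n k) :
    Tmap n k i j d (embedVars n k x) = d x := by
  rw [Tmap, Finsupp.add_apply, Finsupp.add_apply,
    Finsupp.mapDomain_apply embed_inj,
    Finsupp.single_apply_eq_zero.2 (fun h => absurd h (embed_ne_inl0 x)),
    Finsupp.single_apply_eq_zero.2 (fun h => absurd h (embed_ne_inr0 x))]
  simp

lemma Tmap_apply_inl0 (i j : ℕ) (d : Rvars' n k →₀ ℕ) :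
    Tmap n k i j d (Sum.inl 0) = i - degXmon n k d := by
  rw [Tmap, Finsupp.add_apply, Finsupp.add_apply,
    Finsupp.mapDomain_notin_range _ _ inl0_not_range]
  simp

lemma Tmap_apply_inr0 (i j : ℕ) (d : Rvars' n k →₀ ℕ) :
    Tmap n k i j d (Sum.inr 0) = j - degLmon n k d := by
  rw [Tmap, Finsupp.add_apply, Finsupp.add_apply,
    Finsupp.mapDomain_notin_range _ _ inr0_not_range]
  simp

lemma weight_single' (x : Rvars n k) (m : ℕ) :
    Finsupp.weight (bw n k) (Finsupp.single x m) = m • bw n k x := by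
  simp [Finsupp.weight_apply, Finsupp.sum_single_index]

lemma weight_Tmap {i j : ℕ} {d : Rvars' n k →₀ ℕ}
    (h1 : degXmon n k d ≤ i) (h2 : degLmon n k d ≤ j) :
    Finsupp.weight (bw n k) (Tmap n k i j d) = (i, j) := by
  have hX : ∀ x : Rvars' n k, Tmap n k i j d (embedVars n k x) = d x := Tmap_apply_embed i j d
  rw [weight_bw]
  have e1 : ∑ p : Fin (n+1), Tmap n k i j d (Sum.inl p)
      = (i - degXmon n k d) + ∑ p : Fin n, d (Sum.inl p) := by
    rw [Fin.sum_univ_succ, Tmap_apply_inl0]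
    congr 1
    exact Finset.sum_congr rfl fun p _ => hX (Sum.inl p)
  have e2 : ∑ q : Fin (k+1), Tmap n k i j d (Sum.inr q)
      = (j - degLmon n k d) + ∑ q : Fin k, d (Sum.inr q) := by
    rw [Fin.sum_univ_succ, Tmap_apply_inr0]
    congr 1
    exact Finset.sum_congr rfl fun q _ => hX (Sum.inr q)
  rw [e1, e2]
  rw [degXmon] at h1 ⊢; rw [degLmon] at h2 ⊢
  ext <;> simp <;> omega

lemma isWH_phiH {i j : ℕ} {f : MvPolynomial (Rvars' n k) ℚ}
    (hdi : ∀ d ∈ f.support, degXmon n k d ≤ i)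
    (hdj : ∀ d ∈ f.support, degLmon n k d ≤ j) :
    IsWeightedHomogeneous (bw n k) (phiH n k i j f) (i, j) := by
  rw [← mem_weightedHomogeneousSubmodule, phiH_def, Finsupp.sum]
  apply Submodule.sum_mem
  intro d hd
  rw [mem_weightedHomogeneousSubmodule]
  exact isWeightedHomogeneous_monomial _ _ _ (weight_Tmap (hdi d hd) (hdj d hd))

end Helpers2

section Helpers3
variable {n k : ℕ}

/-- values of the dehomogenization: X₀,ℓ₀ ↦ 1, others to themselves -/
def eVal (n k : ℕ) : Rvars n k → MvPolynomial (Rvars' n k) ℚ :=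
  Sum.elim (Fin.cases 1 fun p => X (Sum.inl p)) (Fin.cases 1 fun q => X (Sum.inr q))

/-- the dehomogenization map -/
def eAff (n k : ℕ) : Rpoly n k →ₐ[ℚ] MvPolynomial (Rvars' n k) ℚ := aeval (eVal n k)

lemma eVal_embed (x : Rvars' n k) : eVal n k (embedVars n k x) = X x := by
  cases x <;> simp [eVal, embedVars]

lemma eVal_inl0 : eVal n k (Sum.inl 0) = 1 := rfl
lemma eVal_inr0 : eVal n k (Sum.inr 0) = 1 := rfl

/-- restriction of an exponent vector to the affine variables -/
def rmap (n k : ℕ) (D : Rvars n k →₀ ℕ) : Rvars' n k →₀ ℕ :=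
  Finsupp.equivFunOnFinite.symm fun x => D (embedVars n k x)

lemma rmap_apply (D : Rvars n k →₀ ℕ) (x : Rvars' n k) :
    rmap n k D x = D (embedVars n k x) := rfl

lemma rmap_Tmap (i j : ℕ) (d : Rvars' n k →₀ ℕ) : rmap n k (Tmap n k i j d) = d := by
  ext x; rw [rmap_apply, Tmap_apply_embed]

lemma eAff_monomial (D : Rvars n k →₀ ℕ) (c : ℚ) :
    eAff n k (monomial D c) = monomial (rmap n k D) c := by
  rw [eAff, aeval_monomial, monomial_eq]
  congr 1
  rw [Finsupp.prod_fintype _ _ (fun x => pow_zero _),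
    Finsupp.prod_fintype _ _ (fun x => pow_zero _)]
  rw [Fintype.prod_sum_type, Fintype.prod_sum_type]
  rw [Fin.prod_univ_succ, Fin.prod_univ_succ]
  simp only [eVal_inl0, eVal_inr0, one_pow, one_mul]
  refine congrArg₂ (· * ·) (Finset.prod_congr rfl fun p _ => ?_)
    (Finset.prod_congr rfl fun q _ => ?_)
  · rw [show (Sum.inl p.succ : Rvars n k) = embedVars n k (Sum.inl p) from rfl,
      eVal_embed, rmap_apply]
  · rw [show (Sum.inr q.succ : Rvars n k) = embedVars n k (Sum.inr q) from rfl,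
      eVal_embed, rmap_apply]

lemma phiH_monomial (i j : ℕ) (d : Rvars' n k →₀ ℕ) (c : ℚ) :
    phiH n k i j (monomial d c) = monomial (Tmap n k i j d) c := by
  rw [phiH_def, ← single_eq_monomial d c, AddMonoidAlgebra.coeff_single, Finsupp.sum_single_index]
  simp

/-- `phiH` as an additive monoid hom -/
def phiHHom (n k i j : ℕ) : MvPolynomial (Rvars' n k) ℚ →+ Rpoly n k where
  toFun := phiH n k i j
  map_zero' := by simp [phiH_def]
  map_add' p q := by
    simp only [phiH_def]
    exact Finsupp.sum_add_index (fun a _ => by simp) (fun a _ b1 b2 => by rw [map_add])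

lemma eAff_as_sum (g : Rpoly n k) :
    eAff n k g = ∑ D ∈ g.support, monomial (rmap n k D) (coeff D g) := by
  conv_lhs => rw [g.as_sum]
  rw [map_sum]
  exact Finset.sum_congr rfl fun D _ => eAff_monomial D _

/-- key reconstruction: homogenizing the dehomogenization of a bihomogeneous `g` gives back `g` -/
lemma phiH_eAff {i j : ℕ} {g : Rpoly n k}
    (hg : IsWeightedHomogeneous (bw n k) g (i, j)) :
    phiH n k i j (eAff n k g) = g := by
  classical
  have key : ∀ D ∈ g.support, Tmap n k i j (rmap n k D) = D := by
    intro D hD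
    have hw := hg (mem_support_iff.1 hD)
    rw [weight_bw] at hw
    have hw1 : D (Sum.inl 0) + ∑ p : Fin n, D (Sum.inl p.succ) = i := by
      have := congrArg Prod.fst hw
      simpa [Fin.sum_univ_succ] using this
    have hw2 : D (Sum.inr 0) + ∑ q : Fin k, D (Sum.inr q.succ) = j := by
      have := congrArg Prod.snd hw
      simpa [Fin.sum_univ_succ] using this
    have hdX : degXmon n k (rmap n k D) = ∑ p : Fin n, D (Sum.inl p.succ) := by
      rw [degXmon]; rfl
    have hdL : degLmon n k (rmap n k D) = ∑ q : Fin k, D (Sum.inr q.succ) := by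
      rw [degLmon]; rfl
    ext x
    rcases x with p | q
    · induction p using Fin.cases with
      | zero => rw [Tmap_apply_inl0, hdX]; omega
      | succ p => rw [show (Sum.inl p.succ : Rvars n k) = embedVars n k (Sum.inl p) from rfl,
          Tmap_apply_embed, rmap_apply]
    · induction q using Fin.cases with
      | zero => rw [Tmap_apply_inr0, hdL]; omega
      | succ q => rw [show (Sum.inr q.succ : Rvars n k) = embedVars n k (Sum.inr q) from rfl,
          Tmap_apply_embed, rmap_apply]
  calc phiH n k i j (eAff n k g)
      = ∑ D ∈ g.support, phiH n k i j (monomial (rmap n k D) (coeff D g)) := by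
        rw [eAff_as_sum]; exact map_sum (phiHHom n k i j) _ _
    _ = ∑ D ∈ g.support, monomial D (coeff D g) := by
        refine Finset.sum_congr rfl fun D hD => ?_
        rw [phiH_monomial, key D hD]
    _ = g := g.as_sum.symm

end Helpers3

section Helpers4
variable {n k : ℕ}

lemma eAff_rename (f : MvPolynomial (Rvars' n k) ℚ) :
    eAff n k (rename (embedVars n k) f) = f := by
  rw [eAff, aeval_rename]
  have : (eVal n k ∘ embedVars n k) = X := funext eVal_embed
  rw [this]
  exact aeval_X_left_apply f

/-- the span of X₀-1, ℓ₀-1 -/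
abbrev Jspan (n k : ℕ) : Ideal (Rpoly n k) :=
  Ideal.span {(X (Sum.inl 0) : Rpoly n k) - 1, (X (Sum.inr 0) : Rpoly n k) - 1}

lemma sub_rename_eAff_mem (g : Rpoly n k) :
    g - rename (embedVars n k) (eAff n k g) ∈ Jspan n k := by
  induction g using MvPolynomial.induction_on with
  | C c => simp
  | add p q hp hq =>
    have : p + q - rename (embedVars n k) (eAff n k (p + q))
        = (p - rename (embedVars n k) (eAff n k p))
          + (q - rename (embedVars n k) (eAff n k q)) := by
      rw [map_add, map_add]; ring
    rw [this]; exact Ideal.add_mem _ hp hq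
  | mul_X p x hp =>
    have hX : X x - rename (embedVars n k) (eAff n k (X x)) ∈ Jspan n k := by
      have hx : eAff n k (X x) = eVal n k x := aeval_X _ x
      rcases x with p' | q'
      · induction p' using Fin.cases with
        | zero =>
          rw [hx, eVal_inl0, map_one]
          exact Ideal.subset_span (Set.mem_insert _ _)
        | succ p' =>
          rw [hx, show (Sum.inl p'.succ : Rvars n k) = embedVars n k (Sum.inl p') from rfl,
            eVal_embed, rename_X]
          simp
      · induction q' using Fin.cases with
        | zero =>
          rw [hx, eVal_inr0, map_one]
          exact Ideal.subset_span (Set.mem_insert_of_mem _ rfl)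
        | succ q' =>
          rw [hx, show (Sum.inr q'.succ : Rvars n k) = embedVars n k (Sum.inr q') from rfl,
            eVal_embed, rename_X]
          simp
    have : p * X x - rename (embedVars n k) (eAff n k (p * X x))
        = p * (X x - rename (embedVars n k) (eAff n k (X x)))
          + (p - rename (embedVars n k) (eAff n k p))
            * rename (embedVars n k) (eAff n k (X x)) := by
      rw [map_mul, map_mul]; ring
    rw [this]
    exact Ideal.add_mem _ (Ideal.mul_mem_left _ _ hX) (Ideal.mul_mem_right _ _ hp)

lemma eAff_mem_Jspan_eq_zero {g : Rpoly n k} (hg : g ∈ Jspan n k) : eAff n k g = 0 := by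
  obtain ⟨a, b, rfl⟩ := Ideal.mem_span_pair.1 hg
  have h1 : eAff n k ((X (Sum.inl 0) : Rpoly n k) - 1) = 0 := by
    rw [map_sub, map_one]
    rw [show eAff n k (X (Sum.inl 0)) = eVal n k (Sum.inl 0) from aeval_X _ _, eVal_inl0, sub_self]
  have h2 : eAff n k ((X (Sum.inr 0) : Rpoly n k) - 1) = 0 := by
    rw [map_sub, map_one]
    rw [show eAff n k (X (Sum.inr 0)) = eVal n k (Sum.inr 0) from aeval_X _ _, eVal_inr0, sub_self]
  rw [map_add, map_mul, map_mul, h1, h2, mul_zero, mul_zero, add_zero]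

end Helpers4

section Helpers5
variable {n k : ℕ}

lemma phiH_shift (i j s t : ℕ) (f : MvPolynomial (Rvars' n k) ℚ)
    (hdi : ∀ d ∈ f.support, degXmon n k d ≤ i)
    (hdj : ∀ d ∈ f.support, degLmon n k d ≤ j) :
    phiH n k (i+s) (j+t) f
      = X (Sum.inl 0) ^ s * X (Sum.inr 0) ^ t * phiH n k i j f := by
  rw [phiH_def, phiH_def, X_pow_eq_monomial, X_pow_eq_monomial, monomial_mul, one_mul,
    Finsupp.mul_sum]
  refine Finsupp.sum_congr fun d hd => ?_
  rw [monomial_mul, one_mul]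
  congr 1
  have e1 : i + s - degXmon n k d = (i - degXmon n k d) + s := by
    have := hdi d hd; omega
  have e2 : j + t - degLmon n k d = (j - degLmon n k d) + t := by
    have := hdj d hd; omega
  rw [Tmap, Tmap, e1, e2, Finsupp.single_add, Finsupp.single_add]
  abel_nf

lemma degXmon_le_of_wdeg {i : ℕ} {f : MvPolynomial (Rvars' n k) ℚ}
    (h : weightedTotalDegree (wX' n k) f ≤ i) :
    ∀ d ∈ f.support, degXmon n k d ≤ i := fun d hd => by
  rw [degXmon_eq]; exact le_trans (le_weightedTotalDegree _ hd) h

lemma degLmon_le_of_wdeg {j : ℕ} {f : MvPolynomial (Rvars' n k) ℚ}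
    (h : weightedTotalDegree (wL' n k) f ≤ j) :
    ∀ d ∈ f.support, degLmon n k d ≤ j := fun d hd => by
  rw [degLmon_eq]; exact le_trans (le_weightedTotalDegree _ hd) h

lemma degmon_rmap_le {i j : ℕ} {g : Rpoly n k} (hg : IsWeightedHomogeneous (bw n k) g (i, j))
    {D : Rvars n k →₀ ℕ} (hD : D ∈ g.support) :
    degXmon n k (rmap n k D) ≤ i ∧ degLmon n k (rmap n k D) ≤ j := by
  have hw := hg (mem_support_iff.1 hD)
  rw [weight_bw] at hw
  have hw1 := congrArg Prod.fst hw
  have hw2 := congrArg Prod.snd hw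
  simp only [Fin.sum_univ_succ] at hw1 hw2
  constructor
  · rw [show degXmon n k (rmap n k D) = ∑ p : Fin n, D (Sum.inl p.succ) from rfl]
    omega
  · rw [show degLmon n k (rmap n k D) = ∑ q : Fin k, D (Sum.inr q.succ) from rfl]
    omega

lemma pow_nzd_X {I : Ideal (Rpoly n k)}
    (hX0 : ∀ g : Rpoly n k, X (Sum.inl 0) * g ∈ I → g ∈ I) :
    ∀ (s : ℕ) (g : Rpoly n k), X (Sum.inl 0) ^ s * g ∈ I → g ∈ I := by
  intro s
  induction s with
  | zero => intro g hg; simpa using hg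
  | succ s ih =>
    intro g hg
    have : X (Sum.inl 0) ^ s * (X (Sum.inl 0) * g) ∈ I := by
      convert hg using 1; ring
    exact hX0 g (ih _ this)

lemma pow_nzd_L {I : Ideal (Rpoly n k)}
    (hL0 : ∀ g : Rpoly n k, X (Sum.inr 0) * g ∈ I → g ∈ I) :
    ∀ (s : ℕ) (g : Rpoly n k), X (Sum.inr 0) ^ s * g ∈ I → g ∈ I := by
  intro s
  induction s with
  | zero => intro g hg; simpa using hg
  | succ s ih =>
    intro g hg
    have : X (Sum.inr 0) ^ s * (X (Sum.inr 0) * g) ∈ I := by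
      convert hg using 1; ring
    exact hL0 g (ih _ this)

end Helpers5

section Helpers6
variable {n k : ℕ}

lemma isWH_X_pow (x : Rvars n k) (s : ℕ) :
    IsWeightedHomogeneous (bw n k) ((X x : Rpoly n k) ^ s) (s • bw n k x) := by
  rw [X_pow_eq_monomial]
  exact isWeightedHomogeneous_monomial _ _ _ (weight_single' x s)

lemma wdegX_eAff {i j : ℕ} {g : Rpoly n k} (hg : IsWeightedHomogeneous (bw n k) g (i, j)) :
    weightedTotalDegree (wX' n k) (eAff n k g) ≤ i := by
  classical
  have hsub : (eAff n k g).support ⊆ g.support.image (rmap n k) := by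
    rw [eAff_as_sum]
    refine Finset.Subset.trans MvPolynomial.support_sum (Finset.biUnion_subset.2 ?_)
    intro D hD
    refine Finset.Subset.trans (support_monomial_subset) ?_
    simp only [Finset.singleton_subset_iff]
    exact Finset.mem_image_of_mem _ hD
  apply Finset.sup_le
  intro d hd
  obtain ⟨D, hD, rfl⟩ := Finset.mem_image.1 (hsub hd)
  rw [← degXmon_eq]
  exact (degmon_rmap_le hg hD).1

lemma wdegL_eAff {i j : ℕ} {g : Rpoly n k} (hg : IsWeightedHomogeneous (bw n k) g (i, j)) :
    weightedTotalDegree (wL' n k) (eAff n k g) ≤ j := by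
  classical
  have hsub : (eAff n k g).support ⊆ g.support.image (rmap n k) := by
    rw [eAff_as_sum]
    refine Finset.Subset.trans MvPolynomial.support_sum (Finset.biUnion_subset.2 ?_)
    intro D hD
    refine Finset.Subset.trans (support_monomial_subset) ?_
    simp only [Finset.singleton_subset_iff]
    exact Finset.mem_image_of_mem _ hD
  apply Finset.sup_le
  intro d hd
  obtain ⟨D, hD, rfl⟩ := Finset.mem_image.1 (hsub hd)
  rw [← degLmon_eq]
  exact (degmon_rmap_le hg hD).2

end Helpers6


/-- If X₀ and ℓ₀ are non-zero-divisors mod a bi-homogeneous ideal I, then the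
bi-homogenization to bidegree (i,j) of the dehomogenized ideal
I′ = (I + ⟨X₀-1, ℓ₀-1⟩) ∩ ℚ[X₁,…,Xₙ,ℓ₁,…,ℓ_k] recovers exactly I_{i,j}. -/
theorem phi_dehomogenized_eq_graded_piece (n k : ℕ) (I : Ideal (Rpoly n k))
    (hI : IsBihom n k I)
    (hX0 : ∀ g : Rpoly n k, X (Sum.inl 0) * g ∈ I → g ∈ I)
    (hL0 : ∀ g : Rpoly n k, X (Sum.inr 0) * g ∈ I → g ∈ I)
    (i j : ℕ) :
    {g : Rpoly n k | ∃ f, f ∈ Ideal.comap (rename (embedVars n k))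
        (I ⊔ Ideal.span {(X (Sum.inl 0) : Rpoly n k) - 1, (X (Sum.inr 0) : Rpoly n k) - 1}) ∧
      weightedTotalDegree (wX' n k) f ≤ i ∧ weightedTotalDegree (wL' n k) f ≤ j ∧
      g = phiH n k i j f}
    = {g : Rpoly n k | g ∈ I ∧ IsWeightedHomogeneous (bw n k) g (i, j)} := by
  classical
  ext g
  simp only [Set.mem_setOf_eq]
  constructor
  · rintro ⟨f, hf, hdi, hdj, rfl⟩
    have hdi' := degXmon_le_of_wdeg hdi
    have hdj' := degLmon_le_of_wdeg hdj
    refine ⟨?_, isWH_phiH hdi' hdj'⟩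
    rw [Ideal.mem_comap] at hf
    obtain ⟨h, hhI, jj, hjj, hsum⟩ := Submodule.mem_sup.1 hf
    have hfh : f = eAff n k h := by
      have h2 := congrArg (eAff n k) hsum
      rw [map_add, eAff_mem_Jspan_eq_zero hjj, add_zero, eAff_rename] at h2
      exact h2.symm
    set S := (weightedHomogeneousComponent_finsupp (w := bw n k) (φ := h)).toFinset with hS
    have hdecomp : ∑ m ∈ S, weightedHomogeneousComponent (bw n k) m h = h := by
      have h3 := sum_weightedHomogeneousComponent (bw n k) (φ := h)
      rwa [finsum_eq_sum _ (weightedHomogeneousComponent_finsupp (φ := h))] at h3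
    set i' := weightedTotalDegree (wX' n k) f with hi'def
    set j' := weightedTotalDegree (wL' n k) f with hj'def
    set A := max (S.sup Prod.fst) i' with hA
    set B := max (S.sup Prod.snd) j' with hB
    set H := ∑ m ∈ S, X (Sum.inl 0) ^ (A - m.1) * X (Sum.inr 0) ^ (B - m.2)
      * weightedHomogeneousComponent (bw n k) m h with hH
    have hHI : H ∈ I := Ideal.sum_mem _ fun m _ => Ideal.mul_mem_left _ _ (hI h hhI m)
    have hHwh : IsWeightedHomogeneous (bw n k) H (A, B) := by
      rw [← mem_weightedHomogeneousSubmodule]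
      apply Submodule.sum_mem
      intro m hm
      rw [mem_weightedHomogeneousSubmodule]
      have hm1 : m.1 ≤ A := le_trans (Finset.le_sup (f := Prod.fst) hm) (le_max_left _ _)
      have hm2 : m.2 ≤ B := le_trans (Finset.le_sup (f := Prod.snd) hm) (le_max_left _ _)
      have hmul := ((isWH_X_pow (n := n) (k := k) (Sum.inl 0) (A - m.1)).mul
        (isWH_X_pow (Sum.inr 0) (B - m.2))).mul
        (weightedHomogeneousComponent_isWeightedHomogeneous (w := bw n k) m h)
      convert hmul using 1
      show ((A, B) : ℕ × ℕ) = (A - m.1) • bw n k (Sum.inl 0) + (B - m.2) • bw n k (Sum.inr 0) + m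
      have hb1 : bw n k (Sum.inl (0 : Fin (n+1))) = (1, 0) := rfl
      have hb2 : bw n k (Sum.inr (0 : Fin (k+1))) = (0, 1) := rfl
      rw [hb1, hb2]
      ext <;> simp <;> omega
    have heH : eAff n k H = f := by
      rw [hH, map_sum]
      have h4 : ∀ m ∈ S, eAff n k (X (Sum.inl 0) ^ (A - m.1) * X (Sum.inr 0) ^ (B - m.2)
          * weightedHomogeneousComponent (bw n k) m h)
          = eAff n k (weightedHomogeneousComponent (bw n k) m h) := by
        intro m _
        rw [map_mul, map_mul, map_pow, map_pow,
          show eAff n k (X (Sum.inl 0)) = 1 from aeval_X _ _,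
          show eAff n k (X (Sum.inr 0)) = 1 from aeval_X _ _]
        simp
      rw [Finset.sum_congr rfl h4, ← map_sum, hdecomp, ← hfh]
    have hHphi : phiH n k A B f = H := by
      rw [← heH]; exact phiH_eAff hHwh
    have hi's : ∀ d ∈ f.support, degXmon n k d ≤ i' := degXmon_le_of_wdeg le_rfl
    have hj's : ∀ d ∈ f.support, degLmon n k d ≤ j' := degLmon_le_of_wdeg le_rfl
    have hAi : i' ≤ A := le_max_right _ _
    have hBj : j' ≤ B := le_max_right _ _
    have h1 : phiH n k A B f
        = X (Sum.inl 0) ^ (A - i') * X (Sum.inr 0) ^ (B - j') * phiH n k i' j' f := by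
      have h5 := phiH_shift i' j' (A - i') (B - j') f hi's hj's
      rwa [Nat.add_sub_cancel' hAi, Nat.add_sub_cancel' hBj] at h5
    have h2 : phiH n k i' j' f ∈ I := by
      apply pow_nzd_L hL0 (B - j')
      apply pow_nzd_X hX0 (A - i')
      rw [← mul_assoc, ← h1, hHphi]
      exact hHI
    have h6 : phiH n k i j f
        = X (Sum.inl 0) ^ (i - i') * X (Sum.inr 0) ^ (j - j') * phiH n k i' j' f := by
      have h5 := phiH_shift i' j' (i - i') (j - j') f hi's hj's
      rwa [Nat.add_sub_cancel' hdi, Nat.add_sub_cancel' hdj] at h5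
    rw [h6]
    exact Ideal.mul_mem_left _ _ h2
  · rintro ⟨hgI, hgwh⟩
    refine ⟨eAff n k g, ?_, wdegX_eAff hgwh, wdegL_eAff hgwh, (phiH_eAff hgwh).symm⟩
    rw [Ideal.mem_comap]
    have h1 : g - rename (embedVars n k) (eAff n k g) ∈ Jspan n k := sub_rename_eAff_mem g
    rw [show rename (embedVars n k) (eAff n k g)
      = g - (g - rename (embedVars n k) (eAff n k g)) from (sub_sub_cancel _ _).symm]
    exact Submodule.sub_mem _ (Ideal.mem_sup_left hgI) (Ideal.mem_sup_right h1)
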